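/- arXiv:1904.13299 — 2 statements merged into one kernel-verified Lean document; each statement's English description precedes it below -/
import Mathlib

section
/- Let F : ℝ → ℝ be continuously differentiable with F(r) = 0 and F'(r) ≠ 0. Then the shifted deflated residual G(z) = (1/|z − r| + 1)·F(z) does not tend to 0 as z → r; moreover |G(z)| ≥ |F'(r)|/2 for all z ≠ r sufficiently close to r. -/
open Filter Topology

theorem one_dim_shifted_deflation
    (F : ℝ → ℝ) (hF : ContDiff ℝ 1 F) (r : ℝ) (hFr : F r = 0)
    (hF'r : deriv F r ≠ 0) :
    ¬ Tendsto (fun z => (1 / |z - r| + 1) * F z) (𝓝[≠] r) (𝓝 0) ∧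
      ∃ δ > (0:ℝ), ∀ z : ℝ, z ≠ r → |z - r| < δ →
        |deriv F r| / 2 ≤ |(1 / |z - r| + 1) * F z| := by
  have hd : HasDerivAt F (deriv F r) r :=
    ((hF.differentiable one_ne_zero) r).hasDerivAt
  have hslope : Tendsto (slope F r) (𝓝[≠] r) (𝓝 (deriv F r)) :=
    hasDerivAt_iff_tendsto_slope.mp hd
  have habs : Tendsto (fun z => |slope F r z|) (𝓝[≠] r) (𝓝 |deriv F r|) :=
    hslope.abs
  have hpos : (0:ℝ) < |deriv F r| := abs_pos.mpr hF'r
  have hev : ∀ᶠ z in 𝓝[≠] r, |deriv F r| / 2 ≤ |slope F r z| :=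
    habs.eventually (eventually_ge_nhds (by linarith))
  -- key pointwise bound
  have key : ∀ z : ℝ, z ≠ r → |deriv F r| / 2 ≤ |slope F r z| →
      |deriv F r| / 2 ≤ |(1 / |z - r| + 1) * F z| := by
    intro z hz h
    have hzr : z - r ≠ 0 := sub_ne_zero.mpr hz
    have habs0 : (0:ℝ) < |z - r| := abs_pos.mpr hzr
    have hsl : |slope F r z| = |F z| / |z - r| := by
      rw [slope_def_field, hFr, sub_zero, abs_div]
    calc |deriv F r| / 2 ≤ |F z| / |z - r| := by rw [← hsl]; exact h
      _ = (1 / |z - r|) * |F z| := by rw [div_eq_mul_inv, one_div, mul_comm]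
      _ ≤ (1 / |z - r| + 1) * |F z| := by
          have := abs_nonneg (F z); nlinarith
      _ = |(1 / |z - r| + 1) * F z| := by
          have hp : (0:ℝ) < 1 / |z - r| + 1 := by
            have : (0:ℝ) ≤ 1 / |z - r| := by positivity
            linarith
          rw [abs_mul, abs_of_pos hp]
  have hevG : ∀ᶠ z in 𝓝[≠] r, |deriv F r| / 2 ≤ |(1 / |z - r| + 1) * F z| := by
    filter_upwards [hev, self_mem_nhdsWithin] with z hz hz'
    exact key z hz' hz
  constructor
  · intro hT
    have hlt : ∀ᶠ z in 𝓝[≠] r,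
        |(1 / |z - r| + 1) * F z| < |deriv F r| / 2 := by
      have : Tendsto (fun z => |(1 / |z - r| + 1) * F z|) (𝓝[≠] r) (𝓝 |(0:ℝ)|) :=
        hT.abs
      rw [abs_zero] at this
      exact this.eventually (eventually_lt_nhds (by linarith))
    obtain ⟨z, h1, h2⟩ := (hevG.and hlt).exists
    linarith
  · have := (eventually_nhdsWithin_iff).mp hevG
    rw [Metric.eventually_nhds_iff] at this
    obtain ⟨δ, hδ, hδ'⟩ := this
    refine ⟨δ, hδ, fun z hz hzd => ?_⟩
    have : dist z r < δ := by rwa [Real.dist_eq]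
    exact hδ' this hz
end

section
/- Let Z and V be real normed spaces, F : D ⊆ Z → V semismooth at z ∈ D with Newton derivative H_F, and let m : D → ℝ be Fréchet differentiable at z with derivative m'(z) ∈ Z*. Then G(w) = m(w)·F(w) is semismooth at z with Newton derivative action H_G(w)h = m(w)·H_F(w)h + (m'(w)h)·F(w), i.e., ‖G(z+h) − G(z) − H_G(z+h)h‖ = o(‖h‖). -/
open Filter Topology

theorem newton_derivative_product_rule
    {Z V : Type*} [NormedAddCommGroup Z] [NormedSpace ℝ Z]
    [NormedAddCommGroup V] [NormedSpace ℝ V]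
    (D : Set Z) (hD : IsOpen D) (z : Z) (hz : z ∈ D)
    (F : Z → V) (HF : Z → (Z →L[ℝ] V))
    (K : NNReal) (s : Set Z) (hs : s ∈ 𝓝 z) (hlip : LipschitzOnWith K F s)
    (hss : ∀ ε > (0:ℝ), ∃ δ > (0:ℝ), ∀ h : Z, ‖h‖ < δ →
      ‖F (z + h) - F z - HF (z + h) h‖ ≤ ε * ‖h‖)
    (m : Z → ℝ) (m' : Z → (Z →L[ℝ] ℝ))
    (hm : ∀ w ∈ s, HasFDerivAt m (m' w) w) (hm' : ContinuousAt m' z) :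
    ∀ ε > (0:ℝ), ∃ δ > (0:ℝ), ∀ h : Z, ‖h‖ < δ →
      ‖m (z + h) • F (z + h) - m z • F z -
        (m (z + h) • HF (z + h) h + (m' (z + h) h) • F (z + h))‖ ≤ ε * ‖h‖ := by
  intro ε hε
  have hzs : z ∈ s := mem_of_mem_nhds hs
  set Mb : ℝ := |m z| + 1 with hMb
  set Cb : ℝ := ‖m' z‖ + 1 with hCb
  set Fb : ℝ := ‖F z‖ + 1 with hFb
  have hMb0 : 0 < Mb := by positivity
  have hCb0 : 0 < Cb := by positivity
  have hFb0 : 0 < Fb := by positivity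
  set ε₁ : ℝ := ε / (3 * Mb) with hε₁def
  set ε₂ : ℝ := ε / (6 * Fb) with hε₂def
  have hε₁0 : 0 < ε₁ := by positivity
  have hε₂0 : 0 < ε₂ := by positivity
  -- δ₁ : ball ⊆ s
  obtain ⟨δ₁, hδ₁0, hδ₁⟩ := Metric.mem_nhds_iff.mp hs
  -- δ₂ : continuity of m
  have hmc : ContinuousAt m z := (hm z hzs).continuousAt
  obtain ⟨δ₂, hδ₂0, hδ₂⟩ := Metric.continuousAt_iff.mp hmc 1 one_pos
  -- δ₃ : continuity of m'
  obtain ⟨δ₃, hδ₃0, hδ₃⟩ := Metric.continuousAt_iff.mp hm' (min 1 ε₂) (lt_min one_pos hε₂0)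
  -- δ₄ : differentiability of m at z
  have hdiff : (fun h : Z => m (z + h) - m z - m' z h) =o[𝓝 0] fun h => h :=
    hasFDerivAt_iff_isLittleO_nhds_zero.mp (hm z hzs)
  have hdiff' := (hdiff.def hε₂0)
  obtain ⟨δ₄, hδ₄0, hδ₄⟩ := Metric.eventually_nhds_iff.mp hdiff'
  -- δ₅ : semismoothness of F
  obtain ⟨δ₅, hδ₅0, hδ₅⟩ := hss ε₁ hε₁0
  set δL : ℝ := ε / (3 * Cb * (K + 1)) with hδLdef
  have hδL0 : 0 < δL := by positivity
  refine ⟨min (min δ₁ δ₂) (min (min δ₃ δ₄) (min δ₅ δL)), by positivity, ?_⟩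
  intro h hh
  have hh1 : ‖h‖ < δ₁ := lt_of_lt_of_le hh (le_trans (min_le_left _ _) (min_le_left _ _))
  have hh2 : ‖h‖ < δ₂ := lt_of_lt_of_le hh (le_trans (min_le_left _ _) (min_le_right _ _))
  have hh3 : ‖h‖ < δ₃ := lt_of_lt_of_le hh (le_trans (min_le_right _ _) (le_trans (min_le_left _ _) (min_le_left _ _)))
  have hh4 : ‖h‖ < δ₄ := lt_of_lt_of_le hh (le_trans (min_le_right _ _) (le_trans (min_le_left _ _) (min_le_right _ _)))
  have hh5 : ‖h‖ < δ₅ := lt_of_lt_of_le hh (le_trans (min_le_right _ _) (le_trans (min_le_right _ _) (min_le_left _ _)))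
  have hhL : ‖h‖ < δL := lt_of_lt_of_le hh (le_trans (min_le_right _ _) (le_trans (min_le_right _ _) (min_le_right _ _)))
  have hdzh : dist (z + h) z < δ₁ := by
    simpa [dist_eq_norm] using hh1
  have hzh_s : z + h ∈ s := hδ₁ (Metric.mem_ball.mpr hdzh)
  -- abbreviations
  set a := m (z + h)
  set b := m z
  set u := F (z + h)
  set v := F z
  set T := HF (z + h) h
  set L := (m' (z + h)) h with hL
  -- key algebraic identity
  have key : a • u - b • v - (a • T + L • u)
      = a • (u - v - T) + ((a - b) - L) • v - L • (u - v) := by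
    module
  rw [key]
  -- bound each term
  have hMa : |a| ≤ Mb := by
    have := hδ₂ (show dist (z + h) z < δ₂ by simpa [dist_eq_norm] using hh2)
    rw [Real.dist_eq] at this
    have : |a - b| < 1 := this
    calc |a| = |b + (a - b)| := by ring_nf
      _ ≤ |b| + |a - b| := abs_add_le _ _
      _ ≤ |b| + 1 := by linarith
  have hm'near := hδ₃ (show dist (z + h) z < δ₃ by simpa [dist_eq_norm] using hh3)
  rw [dist_eq_norm] at hm'near
  have hCa : ‖m' (z + h)‖ ≤ Cb := by
    have h1 : ‖m' (z + h) - m' z‖ < 1 := lt_of_lt_of_le hm'near (min_le_left _ _)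
    calc ‖m' (z + h)‖ = ‖m' z + (m' (z + h) - m' z)‖ := by rw [add_sub_cancel]
      _ ≤ ‖m' z‖ + ‖m' (z + h) - m' z‖ := norm_add_le _ _
      _ ≤ ‖m' z‖ + 1 := by linarith
  -- term 1
  have ht1 : ‖a • (u - v - T)‖ ≤ Mb * (ε₁ * ‖h‖) := by
    rw [norm_smul]
    exact mul_le_mul hMa (hδ₅ h hh5) (norm_nonneg _) (le_of_lt hMb0)
  -- term 2 : semismoothness of m
  have habL : |(a - b) - L| ≤ 2 * ε₂ * ‖h‖ := by
    have h4 : ‖m (z + h) - m z - m' z h‖ ≤ ε₂ * ‖h‖ := by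
      have := hδ₄ (y := h) (by simpa [dist_eq_norm] using hh4)
      simpa using this
    have h3 : ‖(m' z - m' (z + h)) h‖ ≤ ε₂ * ‖h‖ := by
      calc ‖(m' z - m' (z + h)) h‖ ≤ ‖m' z - m' (z + h)‖ * ‖h‖ := (m' z - m' (z + h)).le_opNorm h
        _ ≤ ε₂ * ‖h‖ := by
            apply mul_le_mul_of_nonneg_right _ (norm_nonneg h)
            rw [norm_sub_rev]
            exact le_of_lt (lt_of_lt_of_le hm'near (min_le_right _ _))
    have heq : (a - b) - L = (m (z + h) - m z - m' z h) + (m' z - m' (z + h)) h := by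
      simp only [hL, ContinuousLinearMap.sub_apply]
      ring
    rw [heq]
    calc |(m (z + h) - m z - m' z h) + (m' z - m' (z + h)) h|
        ≤ |m (z + h) - m z - m' z h| + |(m' z - m' (z + h)) h| := abs_add_le _ _
      _ ≤ ε₂ * ‖h‖ + ε₂ * ‖h‖ := add_le_add h4 h3
      _ = 2 * ε₂ * ‖h‖ := by ring
  have ht2 : ‖((a - b) - L) • v‖ ≤ 2 * ε₂ * ‖h‖ * ‖v‖ := by
    rw [norm_smul]
    exact mul_le_mul_of_nonneg_right habL (norm_nonneg v)
  -- term 3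
  have hLip : ‖u - v‖ ≤ K * ‖h‖ := by
    have := hlip.dist_le_mul (z + h) hzh_s z hzs
    simpa [dist_eq_norm] using this
  have ht3 : ‖L • (u - v)‖ ≤ Cb * ‖h‖ * (K * ‖h‖) := by
    rw [norm_smul]
    have hLbound : |L| ≤ Cb * ‖h‖ :=
      le_trans ((m' (z + h)).le_opNorm h) (mul_le_mul_of_nonneg_right hCa (norm_nonneg h))
    exact mul_le_mul hLbound hLip (norm_nonneg _) (by positivity)
  -- combine
  have hnorm : ‖a • (u - v - T) + ((a - b) - L) • v - L • (u - v)‖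
      ≤ ‖a • (u - v - T)‖ + ‖((a - b) - L) • v‖ + ‖L • (u - v)‖ := by
    calc ‖a • (u - v - T) + ((a - b) - L) • v - L • (u - v)‖
        ≤ ‖a • (u - v - T) + ((a - b) - L) • v‖ + ‖L • (u - v)‖ := norm_sub_le _ _
      _ ≤ ‖a • (u - v - T)‖ + ‖((a - b) - L) • v‖ + ‖L • (u - v)‖ := by
          gcongr; exact norm_add_le _ _
  have hfinal : ‖a • (u - v - T)‖ + ‖((a - b) - L) • v‖ + ‖L • (u - v)‖ ≤ ε * ‖h‖ := by
    have e1 : Mb * (ε₁ * ‖h‖) = ε / 3 * ‖h‖ := by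
      field_simp [hε₁def]
      rw [hε₁def]; field_simp
    have e2 : 2 * ε₂ * ‖h‖ * ‖v‖ ≤ ε / 3 * ‖h‖ := by
      have hv : ‖v‖ ≤ Fb := by rw [hFb]; linarith [norm_nonneg v]
      have : 2 * ε₂ * ‖h‖ * ‖v‖ ≤ 2 * ε₂ * ‖h‖ * Fb := by
        apply mul_le_mul_of_nonneg_left hv; positivity
      calc 2 * ε₂ * ‖h‖ * ‖v‖ ≤ 2 * ε₂ * Fb * ‖h‖ := by linarith [this]
        _ = ε / 3 * ‖h‖ := by field_simp [hε₂def]; rw [hε₂def]; field_simp; ring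
    have e3 : Cb * ‖h‖ * (K * ‖h‖) ≤ ε / 3 * ‖h‖ := by
      have hK1 : (K : ℝ) ≤ K + 1 := by linarith
      have : Cb * ‖h‖ * (K * ‖h‖) ≤ Cb * (K + 1) * δL * ‖h‖ := by
        have h1 : (K : ℝ) * ‖h‖ ≤ (K + 1) * δL := by
          have := mul_le_mul hK1 (le_of_lt hhL) (norm_nonneg h) (by positivity)
          linarith
        calc Cb * ‖h‖ * (K * ‖h‖) ≤ Cb * ‖h‖ * ((K + 1) * δL) := by
              apply mul_le_mul_of_nonneg_left h1; positivity
          _ = Cb * (K + 1) * δL * ‖h‖ := by ring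
      have hδLval : Cb * (↑K + 1) * δL = ε / 3 := by
        rw [hδLdef]; field_simp
      linarith [this, hδLval ▸ this]
    calc ‖a • (u - v - T)‖ + ‖((a - b) - L) • v‖ + ‖L • (u - v)‖
        ≤ Mb * (ε₁ * ‖h‖) + 2 * ε₂ * ‖h‖ * ‖v‖ + Cb * ‖h‖ * (K * ‖h‖) :=
          add_le_add (add_le_add ht1 ht2) ht3
      _ ≤ ε / 3 * ‖h‖ + ε / 3 * ‖h‖ + ε / 3 * ‖h‖ := by
          rw [e1]; exact add_le_add (add_le_add le_rfl e2) e3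
      _ = ε * ‖h‖ := by ring
  exact le_trans hnorm hfinal
end
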